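/- For every rational solution (d₁₂,d₁₃,d₁₄,d₂₃,d₂₄,d₃₄,y) of y² = CM(x₁₂,...,x₃₄) with the leading coefficient of s ↦ CM(d₁₂,d₁₃,d₁₄+s,d₂₃,d₂₄+s,d₃₄+s) nonzero, the binary quadratic equation y'² = CM(d₁₂,d₁₃,d₁₄+s,d₂₃,d₂₄+s,d₃₄+s) in (s, y') defines a conic with a rational point (0, y); if this conic is smooth it has infinitely many rational points, yielding infinitely many rational solutions of y² = CM. -/
import Mathlib


/-- Half the 5×5 Cayley–Menger determinant, over ℚ. -/
noncomputable def CM (x12 x13 x14 x23 x24 x34 : ℚ) : ℚ :=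
  Matrix.det !![(0 : ℚ), 1, 1, 1, 1;
                1, 0, x12^2, x13^2, x14^2;
                1, x12^2, 0, x23^2, x24^2;
                1, x13^2, x23^2, 0, x34^2;
                1, x14^2, x24^2, x34^2, 0] / 2

/-- From one rational solution of `y² = CM` one obtains infinitely many: the
conic `y'² = CM(d₁₂,d₁₃,d₁₄+s,d₂₃,d₂₄+s,d₃₄+s)` (a binary quadratic in `s` by
Ankum's observation) passes through the rational point `(0, y)`, and if it is
nondegenerate and smooth it has infinitely many rational points. -/
theorem infinitely_many_rational_solutions
    (d12 d13 d14 d23 d24 d34 y : ℚ)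
    (hy : y^2 = CM d12 d13 d14 d23 d24 d34)
    (α β γ : ℚ)
    (hq : ∀ s : ℚ, CM d12 d13 (d14 + s) d23 (d24 + s) (d34 + s)
      = α * s^2 + β * s + γ)
    (hα : α ≠ 0) (hdisc : β^2 - 4 * α * γ ≠ 0) :
    (0, y) ∈ {p : ℚ × ℚ |
        p.2^2 = CM d12 d13 (d14 + p.1) d23 (d24 + p.1) (d34 + p.1)} ∧
    {p : ℚ × ℚ |
        p.2^2 = CM d12 d13 (d14 + p.1) d23 (d24 + p.1) (d34 + p.1)}.Infinite := by
  set S : Set (ℚ × ℚ) := {p : ℚ × ℚ |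
      p.2^2 = CM d12 d13 (d14 + p.1) d23 (d24 + p.1) (d34 + p.1)} with hS
  have hγ : γ = y ^ 2 := by
    have h0 := hq 0
    simp only [add_zero, mul_zero, zero_pow, mul_zero, zero_add, pow_two] at h0
    rw [hy]
    linarith [h0]
  -- if y = 0 then β ≠ 0
  have hyβ : y ≠ 0 ∨ β ≠ 0 := by
    by_cases h : y = 0
    · right
      intro hb
      apply hdisc
      rw [hγ, h, hb]; ring
    · left; exact h
  have hmem0 : (0, y) ∈ S := by
    simp only [hS, Set.mem_setOf_eq]
    rw [hq 0, hγ]; ring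
  refine ⟨hmem0, ?_⟩
  -- the parametrizing function
  set f : ℚ → ℚ × ℚ := fun t =>
    ((β - 2*t*y)/(t^2 - α), y + t*((β - 2*t*y)/(t^2 - α))) with hf
  set T : Set ℚ := {t | t^2 ≠ α ∧ β - 2*t*y ≠ 0} with hT
  have hsub : f '' T ⊆ S := by
    rintro p ⟨t, ⟨ht1, _⟩, rfl⟩
    have hd : t^2 - α ≠ 0 := sub_ne_zero.mpr ht1
    simp only [hS, hf, Set.mem_setOf_eq]
    rw [hq, hγ]
    field_simp
    ring
  have hinj : Set.InjOn f T := by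
    rintro t1 ⟨h11, h12⟩ t2 ⟨h21, h22⟩ heq
    have hd1 : t1^2 - α ≠ 0 := sub_ne_zero.mpr h11
    have hd2 : t2^2 - α ≠ 0 := sub_ne_zero.mpr h21
    have hs1 : (β - 2*t1*y)/(t1^2 - α) ≠ 0 := div_ne_zero h12 hd1
    have h1 := congrArg Prod.fst heq
    have h2 := congrArg Prod.snd heq
    simp only [hf] at h1 h2
    rw [h1] at h2
    have : (t1 - t2) * ((β - 2*t2*y)/(t2^2 - α)) = 0 := by linarith [h2]
    rcases mul_eq_zero.mp this with h | h
    · linarith [sub_eq_zero.mp h]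
    · rw [← h1] at h; exact absurd h hs1
  have hTinf : T.Infinite := by
    have hfin : ({t : ℚ | t^2 = α} ∪ {t : ℚ | β - 2*t*y = 0}).Finite := by
      apply Set.Finite.union
      · have : {t : ℚ | t^2 = α} ⊆ {t : ℚ | (Polynomial.X^2 - Polynomial.C α).IsRoot t} := by
          intro t ht
          simp only [Set.mem_setOf_eq, Polynomial.IsRoot, Polynomial.eval_sub,
            Polynomial.eval_pow, Polynomial.eval_X, Polynomial.eval_C]
          rw [ht]; ring
        refine Set.Finite.subset (Polynomial.finite_setOf_isRoot ?_) this
        intro h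
        have := congrArg (Polynomial.coeff · 2) h
        simp [Polynomial.coeff_X_pow] at this
      · by_cases hy0 : y = 0
        · have hβ0 : β ≠ 0 := hyβ.resolve_left (by simp [hy0])
          have : {t : ℚ | β - 2*t*y = 0} ⊆ ∅ := by
            intro t ht
            simp only [Set.mem_setOf_eq, hy0, mul_zero, sub_zero] at ht
            exact absurd ht hβ0
          exact Set.Finite.subset Set.finite_empty this
        · have : {t : ℚ | β - 2*t*y = 0} ⊆ {β / (2*y)} := by
            intro t ht
            simp only [Set.mem_setOf_eq] at ht
            simp only [Set.mem_singleton_iff]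
            field_simp
            linarith
          exact Set.Finite.subset (Set.finite_singleton _) this
    have := hfin.infinite_compl
    apply this.mono
    intro t ht
    simp only [Set.mem_compl_iff, Set.mem_union, Set.mem_setOf_eq, not_or] at ht
    exact ht
  exact (hTinf.image hinj).mono hsub
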